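/- Let d ≥ 1, 0 < α ≤ β ≤ d, and let Q₀ ⊂ ℝ^d be a cube. There is a constant C > 0 depending only on α, β, and d such that every u ∈ BMO^α(Q₀) belongs to BMO^β(Q₀) and ‖u‖_{BMO^β(Q₀)} ≤ C ‖u‖_{BMO^α(Q₀)}. -/

import Mathlib

open Set MeasureTheory ENNReal NNReal Filter

noncomputable section

/-- `ℝ^d` with the Euclidean metric. -/
abbrev Euc (d : ℕ) : Type := EuclideanSpace ℝ (Fin d)

/-- An axis-parallel cube in `ℝ^d`, given by its lower corner and (positive) side length. -/
structure Cube (d : ℕ) where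
  corner : Fin d → ℝ
  side : ℝ
  side_pos : 0 < side

namespace Cube

/-- The (half-open) set of points of the cube. -/
def set {d : ℕ} (Q : Cube d) : Set (Euc d) :=
  {x : Euc d | ∀ i, Q.corner i ≤ x i ∧ x i < Q.corner i + Q.side}

/-- The dyadic lattice `𝓓(Q)` generated by `Q`: all cubes of side `l(Q)·2ⁿ` (`n : ℤ`) with
corners on the correspondingly rescaled grid anchored at the corner of `Q`; equivalently `Q`,
its dyadic ancestors, and all of their repeated dyadic subdivisions. -/
def dyadic {d : ℕ} (Q : Cube d) : Set (Cube d) :=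
  {Q' | ∃ (n : ℤ) (k : Fin d → ℤ), Q'.side = Q.side * 2 ^ n ∧
    ∀ i, Q'.corner i = Q.corner i + (k i : ℝ) * (Q.side * 2 ^ n)}

end Cube

/-- The spherical Hausdorff content `𝓗^β_∞`, with `ω_β = π^{β/2}/Γ(β/2+1)`. -/
def hausdorffContent (d : ℕ) (β : ℝ) (E : Set (Euc d)) : ℝ≥0∞ :=
  ⨅ (c : ℕ → Euc d × ℝ) (_ : E ⊆ ⋃ i, Metric.ball (c i).1 (c i).2),
    ∑' i, ENNReal.ofReal (Real.pi ^ (β / 2) / Real.Gamma (β / 2 + 1) * (c i).2 ^ β)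

/-- The dyadic Hausdorff content `𝓗^{β,Q}_∞` adapted to the cube `Q`. -/
def dyadicContent (d : ℕ) (β : ℝ) (Q : Cube d) (E : Set (Euc d)) : ℝ≥0∞ :=
  ⨅ (c : ℕ → Cube d) (_ : ∀ i, c i ∈ Q.dyadic) (_ : E ⊆ ⋃ i, (c i).set),
    ∑' i, ENNReal.ofReal ((c i).side ^ β)

/-- The Choquet integral `∫_A f dH := ∫_0^∞ H({x ∈ A : f x > t}) dt`. -/
def choquetIntegral {X : Type*} (H : Set X → ℝ≥0∞) (A : Set X) (f : X → ℝ) : ℝ≥0∞ :=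
  ∫⁻ t in Set.Ioi (0 : ℝ), H {x | x ∈ A ∧ t < f x}

/-- `f` is `H`-quasicontinuous: for every `ε > 0` there is an open set `O` with `H O < ε`
such that `f` restricted to `Oᶜ` is continuous. -/
def QuasiContinuous {X : Type*} [TopologicalSpace X] (H : Set X → ℝ≥0∞) (f : X → ℝ) : Prop :=
  ∀ ε : ℝ, 0 < ε → ∃ O : Set X, IsOpen O ∧ H O < ENNReal.ofReal ε ∧ ContinuousOn f Oᶜ

/-- `f ∈ L¹(A; H)`: `f` is `H`-quasicontinuous and `∫_A |f| dH < ∞`. -/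
def MemChoquetL1 {X : Type*} [TopologicalSpace X] (H : Set X → ℝ≥0∞) (A : Set X)
    (f : X → ℝ) : Prop :=
  QuasiContinuous H f ∧ choquetIntegral H A (fun x => |f x|) < ⊤

/-- The `BMO^β(Q₀)` seminorm: `sup_{Q ⊆ Q₀} inf_{c ∈ ℝ} l(Q)^{-β} ∫_Q |u - c| d𝓗^β_∞`. -/
def bmoSeminorm (d : ℕ) (β : ℝ) (Q₀ : Set (Euc d)) (u : Euc d → ℝ) : ℝ≥0∞ :=
  ⨆ (Q : Cube d) (_ : Q.set ⊆ Q₀),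
    ⨅ c : ℝ, choquetIntegral (hausdorffContent d β) Q.set (fun x => |u x - c|) /
      ENNReal.ofReal (Q.side ^ β)

/-- Membership in `BMO^β(Q₀)`. -/
def MemBMO (d : ℕ) (β : ℝ) (Q₀ : Set (Euc d)) (u : Euc d → ℝ) : Prop :=
  MemChoquetL1 (hausdorffContent d β) Q₀ u ∧ bmoSeminorm d β Q₀ u < ⊤


/-- The classical John–Nirenberg BMO seminorm on `Q₀` with respect to Lebesgue measure. -/
def bmoClassical (d : ℕ) (Q₀ : Set (Euc d)) (u : Euc d → ℝ) : ℝ≥0∞ :=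
  ⨆ (Q : Cube d) (_ : Q.set ⊆ Q₀),
    (volume Q.set)⁻¹ * ∫⁻ x in Q.set, ENNReal.ofReal |u x - ⨍ y in Q.set, u y|

/-- The axis-parallel affine subspace of `ℝ^d` obtained by freeing the coordinates in `S`
and fixing the remaining coordinates to the values of `b`. -/
def hyperplane (d : ℕ) (S : Finset (Fin d)) (b : Fin d → ℝ) : Set (Euc d) :=
  {x : Euc d | ∀ i ∉ S, x i = b i}

/-- The classical BMO seminorm of `u` on `Q₀ ∩ H` with respect to the `k`-dimensional
Hausdorff measure `𝓗^k`, the supremum being over the subcubes `Q.set ∩ H ⊆ Q₀ ∩ H`. -/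
def bmoClassicalOnPlane (d k : ℕ) (Q₀ : Cube d) (H : Set (Euc d)) (u : Euc d → ℝ) : ℝ≥0∞ :=
  ⨆ (Q : Cube d) (_ : Q.set ∩ H ⊆ Q₀.set),
    (Measure.hausdorffMeasure (k : ℝ) (Q.set ∩ H))⁻¹ *
      ∫⁻ x in Q.set ∩ H,
        ENNReal.ofReal |u x - ⨍ y in Q.set ∩ H, u y ∂(Measure.hausdorffMeasure (k : ℝ))|
          ∂(Measure.hausdorffMeasure (k : ℝ))

/-- The unique dyadic cube of `𝓓(Q)` of generation `n` (side `l(Q)·2^{-n}`) containing `x`. -/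
def dyadicCubeAt {d : ℕ} (Q : Cube d) (n : ℕ) (x : Euc d) : Cube d where
  corner := fun i => Q.corner i + Q.side * (2 : ℝ)⁻¹ ^ n *
    (⌊(x i - Q.corner i) / (Q.side * (2 : ℝ)⁻¹ ^ n)⌋ : ℝ)
  side := Q.side * (2 : ℝ)⁻¹ ^ n
  side_pos := by have := Q.side_pos; positivity

/-- The dyadic `β`-Hausdorff maximal function associated to `𝓗^{β,Q}_∞`. -/
def dyadicMaximal (d : ℕ) (β : ℝ) (Q : Cube d) (f : Euc d → ℝ) (x : Euc d) : ℝ≥0∞ :=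
  ⨆ (Q' : Cube d) (_ : Q' ∈ Q.dyadic) (_ : x ∈ Q'.set),
    choquetIntegral (dyadicContent d β Q) Q'.set (fun y => |f y|) / ENNReal.ofReal (Q'.side ^ β)

/-- The `BMO^{β,p}(Q₀)` seminorm. -/
def bmoSeminormP (d : ℕ) (β p : ℝ) (Q₀ : Set (Euc d)) (u : Euc d → ℝ) : ℝ≥0∞ :=
  ⨆ (Q : Cube d) (_ : Q.set ⊆ Q₀),
    ⨅ c : ℝ, (choquetIntegral (hausdorffContent d β) Q.set (fun x => |u x - c| ^ p) /
      ENNReal.ofReal (Q.side ^ β)) ^ (1 / p)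

/-- The standard normalization constant `γ(α) = π^{d/2} 2^α Γ(α/2) / Γ((d-α)/2)`. -/
def rieszConst (d : ℕ) (α : ℝ) : ℝ :=
  Real.pi ^ ((d : ℝ) / 2) * 2 ^ α * Real.Gamma (α / 2) / Real.Gamma (((d : ℝ) - α) / 2)

/-- The Riesz potential `I_α μ (x) = γ(α)⁻¹ ∫ |x - y|^{α - d} dμ(y)`. -/
def rieszPotential (d : ℕ) (α : ℝ) (μ : Measure (Euc d)) (x : Euc d) : ℝ :=
  (rieszConst d α)⁻¹ * (∫⁻ y, ENNReal.ofReal (‖x - y‖ ^ (α - (d : ℝ))) ∂μ).toReal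

/-- The Morrey norm `‖μ‖_{ℳ^γ} = sup_{x, r>0} μ(B(x,r))/r^γ`. -/
def morreyNorm (d : ℕ) (γ : ℝ) (μ : Measure (Euc d)) : ℝ≥0∞ :=
  ⨆ (x : Euc d) (r : ℝ) (_ : 0 < r), μ (Metric.ball x r) / ENNReal.ofReal (r ^ γ)

/-- The dyadic `BMO^β_*(Q₀)` seminorm, where for each subcube `Q` the dyadic Hausdorff
content adapted to that `Q` is used. -/
def bmoDyadicSeminorm (d : ℕ) (β : ℝ) (Q₀ : Set (Euc d)) (u : Euc d → ℝ) : ℝ≥0∞ :=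
  ⨆ (Q : Cube d) (_ : Q.set ⊆ Q₀),
    ⨅ c : ℝ, choquetIntegral (dyadicContent d β Q) Q.set (fun x => |u x - c|) /
      ENNReal.ofReal (Q.side ^ β)

/-- A (possibly infinite) cube in `ℝ^d`: either a finite cube, or a product of intervals
which are infinite in every coordinate direction. -/
def IsGenCube (d : ℕ) (S : Set (Euc d)) : Prop :=
  (∃ Q : Cube d, S = Q.set) ∨
  (∃ I : Fin d → Set ℝ,
      (∀ i, (∃ a, I i = Set.Ici a) ∨ (∃ b, I i = Set.Iio b) ∨ I i = Set.univ) ∧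
      S = {x : Euc d | ∀ i, x i ∈ I i})

/-- The Choquet integral of an `ℝ≥0∞`-valued function. -/
def choquetIntegralE {X : Type*} (H : Set X → ℝ≥0∞) (f : X → ℝ≥0∞) : ℝ≥0∞ :=
  ∫⁻ t in Set.Ioi (0 : ℝ), H {x | ENNReal.ofReal t < f x}

/-- normalization constant -/
def omegaC (β : ℝ) : ℝ := Real.pi ^ (β / 2) / Real.Gamma (β / 2 + 1)

lemma omegaC_pos {β : ℝ} (hβ : 0 < β) : 0 < omegaC β := by
  unfold omegaC
  have h1 : (0:ℝ) < Real.pi ^ (β / 2) := Real.rpow_pos_of_pos Real.pi_pos _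
  have h2 : (0:ℝ) < Real.Gamma (β / 2 + 1) := Real.Gamma_pos_of_pos (by linarith)
  positivity

lemma content_le_of_subset_ball (d : ℕ) {α β : ℝ} (hα : 0 < α) (hαβ : α ≤ β)
    {E : Set (Euc d)} {x₀ : Euc d} {R : ℝ} (hR : 0 < R) (hE : E ⊆ Metric.ball x₀ R) :
    hausdorffContent d β E ≤
      ENNReal.ofReal (omegaC β / omegaC α * R ^ (β - α)) * hausdorffContent d α E := by
  classical
  have hβ : 0 < β := lt_of_lt_of_le hα hαβ
  have hωα := omegaC_pos hα
  have hωβ := omegaC_pos hβ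
  set K : ℝ := omegaC β / omegaC α * R ^ (β - α) with hK
  have hKpos : 0 < K := by
    have : (0:ℝ) < R ^ (β - α) := Real.rpow_pos_of_pos hR _
    positivity
  have ha0 : (ENNReal.ofReal K) ≠ 0 := by simp [ENNReal.ofReal_eq_zero]; linarith
  have hat : (ENNReal.ofReal K) ≠ ∞ := ENNReal.ofReal_ne_top
  -- main estimate for a single cover
  have main : ∀ c : ℕ → Euc d × ℝ, E ⊆ (⋃ i, Metric.ball (c i).1 (c i).2) →
      hausdorffContent d β E ≤
        ENNReal.ofReal K * ∑' i, ENNReal.ofReal (omegaC α * (c i).2 ^ α) := by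
    intro c hc
    set c' : ℕ → Euc d × ℝ := fun i =>
      if (c i).2 ≤ 0 then ((c i).1, 0) else if (c i).2 ≤ R then c i else (x₀, R) with hc'def
    have hcov : E ⊆ ⋃ i, Metric.ball (c' i).1 (c' i).2 := by
      intro x hx
      obtain ⟨_, ⟨i, rfl⟩, hxi⟩ := hc hx
      refine mem_iUnion.2 ⟨i, ?_⟩
      simp only [hc'def]
      by_cases h0 : (c i).2 ≤ 0
      · exact absurd (lt_of_le_of_lt dist_nonneg (Metric.mem_ball.1 hxi)) (not_lt.2 h0)
      · by_cases hR' : (c i).2 ≤ R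
        · simpa [h0, hR'] using hxi
        · simpa [h0, hR'] using hE hx
    have hle : hausdorffContent d β E ≤
        ∑' i, ENNReal.ofReal (omegaC β * (c' i).2 ^ β) := by
      have := iInf₂_le (f := fun (c : ℕ → Euc d × ℝ)
        (_ : E ⊆ ⋃ i, Metric.ball (c i).1 (c i).2) =>
        ∑' i, ENNReal.ofReal (Real.pi ^ (β / 2) / Real.Gamma (β / 2 + 1) * (c i).2 ^ β))
        c' hcov
      exact this
    refine hle.trans ?_
    rw [← ENNReal.tsum_mul_left]
    refine ENNReal.tsum_le_tsum fun i => ?_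
    rw [← ENNReal.ofReal_mul hKpos.le]
    simp only [hc'def]
    by_cases h0 : (c i).2 ≤ 0
    · simp only [h0, if_true]
      rw [Real.zero_rpow (ne_of_gt hβ), mul_zero, ENNReal.ofReal_zero]
      exact zero_le
    · push_neg at h0
      refine ENNReal.ofReal_le_ofReal ?_
      have hKmul : K * (omegaC α * (c i).2 ^ α) = omegaC β * (R ^ (β - α) * (c i).2 ^ α) := by
        rw [hK]; field_simp
      by_cases hR' : (c i).2 ≤ R
      · simp only [not_le.2 h0, if_false, hR', if_true]
        rw [hKmul]
        have hsplit : (c i).2 ^ β = (c i).2 ^ (β - α) * (c i).2 ^ α := by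
          rw [← Real.rpow_add h0]; ring_nf
        rw [hsplit]
        have h1 : (c i).2 ^ (β - α) ≤ R ^ (β - α) :=
          Real.rpow_le_rpow h0.le hR' (sub_nonneg.2 hαβ)
        have h2 : (0:ℝ) ≤ (c i).2 ^ α := Real.rpow_nonneg h0.le _
        gcongr
      · simp only [not_le.2 h0, if_false, hR', if_false]
        rw [hKmul]
        have hsplit : R ^ β = R ^ (β - α) * R ^ α := by
          rw [← Real.rpow_add hR]; ring_nf
        rw [hsplit]
        have h1 : R ^ α ≤ (c i).2 ^ α :=
          Real.rpow_le_rpow hR.le (not_le.1 hR').le hα.le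
        have h2 : (0:ℝ) ≤ R ^ (β - α) := Real.rpow_nonneg hR.le _
        gcongr
  -- pass to the infimum
  have hrw : ENNReal.ofReal K * hausdorffContent d α E =
      ⨅ c : ℕ → Euc d × ℝ, ENNReal.ofReal K *
        ⨅ (_ : E ⊆ ⋃ i, Metric.ball (c i).1 (c i).2),
          ∑' i, ENNReal.ofReal (Real.pi ^ (α / 2) / Real.Gamma (α / 2 + 1) * (c i).2 ^ α) := by
    rw [hausdorffContent, ENNReal.mul_iInf_of_ne ha0 hat]
  rw [hrw]
  refine le_iInf fun c => ?_
  by_cases hc : E ⊆ ⋃ i, Metric.ball (c i).1 (c i).2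
  · rw [iInf_pos hc]
    exact main c hc
  · rw [iInf_neg hc, ENNReal.mul_top ha0]
    exact le_top


lemma content_le_of_small (d : ℕ) {α β : ℝ} (hα : 0 < α) (hαβ : α ≤ β)
    {O : Set (Euc d)} {δ : ℝ} (hδω : δ ≤ omegaC α)
    (h : hausdorffContent d α O < ENNReal.ofReal δ) :
    hausdorffContent d β O ≤ ENNReal.ofReal (omegaC β / omegaC α * δ) := by
  classical
  have hβ : 0 < β := lt_of_lt_of_le hα hαβ
  have hωα := omegaC_pos hα
  have hωβ := omegaC_pos hβ
  rw [hausdorffContent, iInf_lt_iff] at h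
  obtain ⟨c, hc⟩ := h
  rw [iInf_lt_iff] at hc
  obtain ⟨hcov, hsum⟩ := hc
  set c' : ℕ → Euc d × ℝ := fun i =>
    if (c i).2 ≤ 0 then ((c i).1, 0) else c i with hc'def
  have hcov' : O ⊆ ⋃ i, Metric.ball (c' i).1 (c' i).2 := by
    intro x hx
    obtain ⟨_, ⟨i, rfl⟩, hxi⟩ := hcov hx
    refine mem_iUnion.2 ⟨i, ?_⟩
    simp only [hc'def]
    by_cases h0 : (c i).2 ≤ 0
    · exact absurd (lt_of_le_of_lt dist_nonneg (Metric.mem_ball.1 hxi)) (not_lt.2 h0)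
    · simpa [h0] using hxi
  have hle : hausdorffContent d β O ≤
      ∑' i, ENNReal.ofReal (omegaC β * (c' i).2 ^ β) :=
    iInf₂_le (f := fun (c : ℕ → Euc d × ℝ)
      (_ : O ⊆ ⋃ i, Metric.ball (c i).1 (c i).2) =>
      ∑' i, ENNReal.ofReal (Real.pi ^ (β / 2) / Real.Gamma (β / 2 + 1) * (c i).2 ^ β))
      c' hcov'
  refine hle.trans ?_
  have hterm : ∀ i, ENNReal.ofReal (omegaC β * (c' i).2 ^ β) ≤
      ENNReal.ofReal (omegaC β / omegaC α) *
        ENNReal.ofReal (omegaC α * (c i).2 ^ α) := by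
    intro i
    rw [← ENNReal.ofReal_mul (by positivity)]
    simp only [hc'def]
    by_cases h0 : (c i).2 ≤ 0
    · simp only [h0, if_true]
      rw [Real.zero_rpow (ne_of_gt hβ), mul_zero, ENNReal.ofReal_zero]
      exact zero_le
    · push_neg at h0
      simp only [not_le.2 h0, if_false]
      refine ENNReal.ofReal_le_ofReal ?_
      have hri : (c i).2 ≤ 1 := by
        by_contra hr1
        push_neg at hr1
        have h1 : (1:ℝ) ≤ (c i).2 ^ α := Real.one_le_rpow hr1.le hα.le
        have h2 : ENNReal.ofReal (omegaC α * (c i).2 ^ α) < ENNReal.ofReal (omegaC α) := by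
          refine lt_of_le_of_lt (ENNReal.le_tsum i) (lt_of_lt_of_le hsum ?_)
          exact ENNReal.ofReal_le_ofReal hδω
        rw [ENNReal.ofReal_lt_ofReal_iff hωα] at h2
        nlinarith
      have h1 : (c i).2 ^ β ≤ (c i).2 ^ α :=
        Real.rpow_le_rpow_of_exponent_ge h0 hri hαβ
      have heq : omegaC β / omegaC α * (omegaC α * (c i).2 ^ α) =
          omegaC β * (c i).2 ^ α := by
        field_simp
      rw [heq]
      exact mul_le_mul_of_nonneg_left h1 hωβ.le
  calc ∑' i, ENNReal.ofReal (omegaC β * (c' i).2 ^ β)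
      ≤ ∑' i, ENNReal.ofReal (omegaC β / omegaC α) *
          ENNReal.ofReal (omegaC α * (c i).2 ^ α) := ENNReal.tsum_le_tsum hterm
    _ = ENNReal.ofReal (omegaC β / omegaC α) *
          ∑' i, ENNReal.ofReal (omegaC α * (c i).2 ^ α) := ENNReal.tsum_mul_left
    _ ≤ ENNReal.ofReal (omegaC β / omegaC α) * ENNReal.ofReal δ := by
        exact mul_le_mul_right hsum.le _
    _ = ENNReal.ofReal (omegaC β / omegaC α * δ) := by
        rw [ENNReal.ofReal_mul (by positivity)]

lemma choquet_le_mul {X : Type*} (H1 H2 : Set X → ℝ≥0∞) (A : Set X) (f : X → ℝ)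
    (K : ℝ≥0∞) (hK : K ≠ ∞) (h : ∀ S ⊆ A, H2 S ≤ K * H1 S) :
    choquetIntegral H2 A f ≤ K * choquetIntegral H1 A f := by
  unfold choquetIntegral
  calc (∫⁻ t in Set.Ioi (0:ℝ), H2 {x | x ∈ A ∧ t < f x})
      ≤ ∫⁻ t in Set.Ioi (0:ℝ), K * H1 {x | x ∈ A ∧ t < f x} :=
        lintegral_mono fun t => h _ (fun x hx => hx.1)
    _ = K * ∫⁻ t in Set.Ioi (0:ℝ), H1 {x | x ∈ A ∧ t < f x} :=
        lintegral_const_mul' _ _ hK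

lemma cube_subset_ball {d : ℕ} (hd : 1 ≤ d) (Q : Cube d) :
    Q.set ⊆ Metric.ball ((WithLp.equiv 2 (Fin d → ℝ)).symm Q.corner)
      (Q.side * Real.sqrt d) := by
  intro x hx
  rw [Metric.mem_ball, EuclideanSpace.dist_eq]
  have hlt : ∑ i, dist (x i) ((WithLp.equiv 2 (Fin d → ℝ)).symm Q.corner i) ^ 2 <
      ∑ _i : Fin d, Q.side ^ 2 := by
    refine Finset.sum_lt_sum_of_nonempty ?_ fun i _ => ?_
    · exact Finset.univ_nonempty_iff.2 (by
        have : 0 < d := hd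
        exact ⟨⟨0, this⟩⟩)
    · have h1 := (hx i).1
      have h2 := (hx i).2
      have hdist : dist (x i) ((WithLp.equiv 2 (Fin d → ℝ)).symm Q.corner i) = x i - Q.corner i := by
        rw [Real.dist_eq, abs_of_nonneg (by simpa using sub_nonneg.2 h1)]
        rfl
      rw [hdist]
      have hs := Q.side_pos
      nlinarith
  have h2 : Real.sqrt (∑ i, dist (x i) ((WithLp.equiv 2 (Fin d → ℝ)).symm Q.corner i) ^ 2) <
      Real.sqrt (∑ _i : Fin d, Q.side ^ 2) := by
    refine Real.sqrt_lt_sqrt ?_ hlt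
    exact Finset.sum_nonneg fun i _ => sq_nonneg _
  refine h2.trans_le (le_of_eq ?_)
  rw [Finset.sum_const, Finset.card_univ, Fintype.card_fin, nsmul_eq_mul]
  rw [Real.sqrt_mul (by positivity), Real.sqrt_sq Q.side_pos.le, mul_comm]

lemma ennreal_iInf_le_mul_iInf {ι : Sort*} {a : ℝ≥0∞} (ha0 : a ≠ 0) (hat : a ≠ ∞)
    {f g : ι → ℝ≥0∞} (h : ∀ i, g i ≤ a * f i) : (⨅ i, g i) ≤ a * ⨅ i, f i := by
  have h2 : (⨅ j, g j) / a ≤ ⨅ i, f i := by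
    refine le_iInf fun i => ?_
    exact (ENNReal.div_le_iff_le_mul (Or.inl ha0) (Or.inl hat)).mpr
      ((iInf_le g i).trans ((h i).trans_eq (mul_comm _ _)))
  have := (ENNReal.div_le_iff_le_mul (Or.inl ha0) (Or.inl hat)).mp h2
  rwa [mul_comm] at this


theorem bmo_nesting (d : ℕ) (hd : 1 ≤ d) (α β : ℝ) (hα : 0 < α) (hαβ : α ≤ β)
    (hβd : β ≤ (d : ℝ)) (Q₀ : Cube d) :
    ∃ C : ℝ, 0 < C ∧
      ∀ u : Euc d → ℝ, MemBMO d α Q₀.set u →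
        MemBMO d β Q₀.set u ∧
        bmoSeminorm d β Q₀.set u ≤ ENNReal.ofReal C * bmoSeminorm d α Q₀.set u := by
  have hβ : 0 < β := lt_of_lt_of_le hα hαβ
  have hωα := omegaC_pos hα
  have hωβ := omegaC_pos hβ
  have hsd : (0:ℝ) < Real.sqrt d := Real.sqrt_pos.2 (by exact_mod_cast hd)
  set C0 : ℝ := omegaC β / omegaC α * (Real.sqrt d) ^ (β - α) with hC0def
  have hC0 : 0 < C0 := by
    have : (0:ℝ) < (Real.sqrt d) ^ (β - α) := Real.rpow_pos_of_pos hsd _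
    positivity
  have hC0ne0 : ENNReal.ofReal C0 ≠ 0 := by
    simp only [ne_eq, ENNReal.ofReal_eq_zero, not_le]; exact hC0
  refine ⟨C0, hC0, fun u hu => ?_⟩
  obtain ⟨⟨hqc, hint⟩, hsem⟩ := hu
  -- the key comparison for the Choquet integrals over a cube
  have key : ∀ (Q : Cube d) (f : Euc d → ℝ),
      choquetIntegral (hausdorffContent d β) Q.set f ≤
        ENNReal.ofReal (C0 * Q.side ^ (β - α)) *
          choquetIntegral (hausdorffContent d α) Q.set f := by
    intro Q f
    have hs := Q.side_pos
    have hRpos : (0:ℝ) < Q.side * Real.sqrt d := by positivity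
    have heq : omegaC β / omegaC α * (Q.side * Real.sqrt d) ^ (β - α) =
        C0 * Q.side ^ (β - α) := by
      rw [hC0def, Real.mul_rpow hs.le hsd.le]; ring
    refine choquet_le_mul _ _ _ _ _ ENNReal.ofReal_ne_top fun S hS => ?_
    rw [← heq]
    exact content_le_of_subset_ball d hα hαβ hRpos (hS.trans (cube_subset_ball hd Q))
  -- per-cube seminorm comparison
  have percube : ∀ (Q : Cube d),
      (⨅ c : ℝ, choquetIntegral (hausdorffContent d β) Q.set (fun x => |u x - c|) /
        ENNReal.ofReal (Q.side ^ β)) ≤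
      ENNReal.ofReal C0 *
      ⨅ c : ℝ, choquetIntegral (hausdorffContent d α) Q.set (fun x => |u x - c|) /
        ENNReal.ofReal (Q.side ^ α) := by
    intro Q
    have hs := Q.side_pos
    refine ennreal_iInf_le_mul_iInf hC0ne0 ENNReal.ofReal_ne_top fun c => ?_
    set X := choquetIntegral (hausdorffContent d α) Q.set (fun x => |u x - c|)
    set Y := choquetIntegral (hausdorffContent d β) Q.set (fun x => |u x - c|)
    have hB0 : ENNReal.ofReal (Q.side ^ (β - α)) ≠ 0 := by
      simp only [ne_eq, ENNReal.ofReal_eq_zero, not_le]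
      exact Real.rpow_pos_of_pos hs _
    have hsplit : ENNReal.ofReal (Q.side ^ β) =
        ENNReal.ofReal (Q.side ^ (β - α)) * ENNReal.ofReal (Q.side ^ α) := by
      rw [← ENNReal.ofReal_mul (Real.rpow_nonneg hs.le _), ← Real.rpow_add hs]
      ring_nf
    have hY : Y ≤ ENNReal.ofReal (Q.side ^ (β - α)) *
        (ENNReal.ofReal C0 * X) := by
      refine (key Q _).trans (le_of_eq ?_)
      rw [ENNReal.ofReal_mul hC0.le]
      ring
    calc Y / ENNReal.ofReal (Q.side ^ β)
        ≤ (ENNReal.ofReal (Q.side ^ (β - α)) * (ENNReal.ofReal C0 * X)) /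
            (ENNReal.ofReal (Q.side ^ (β - α)) * ENNReal.ofReal (Q.side ^ α)) := by
          rw [hsplit]
          exact ENNReal.div_le_div_right hY _
      _ = (ENNReal.ofReal C0 * X) / ENNReal.ofReal (Q.side ^ α) :=
          ENNReal.mul_div_mul_left _ _ hB0 ENNReal.ofReal_ne_top
      _ = ENNReal.ofReal C0 * (X / ENNReal.ofReal (Q.side ^ α)) :=
          mul_div_assoc _ _ _
  -- seminorm inequality
  have hsemle : bmoSeminorm d β Q₀.set u ≤ ENNReal.ofReal C0 * bmoSeminorm d α Q₀.set u := by
    rw [bmoSeminorm, bmoSeminorm]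
    refine iSup₂_le fun Q hQ => ?_
    refine (percube Q).trans (mul_le_mul_right ?_ _)
    exact le_iSup₂ (f := fun (Q : Cube d) (_ : Q.set ⊆ Q₀.set) =>
      ⨅ c : ℝ, choquetIntegral (hausdorffContent d α) Q.set (fun x => |u x - c|) /
        ENNReal.ofReal (Q.side ^ α)) Q hQ
  -- quasicontinuity for β
  have hqcβ : QuasiContinuous (hausdorffContent d β) u := by
    intro ε hε
    set δ : ℝ := min (omegaC α) (ε * omegaC α / (2 * omegaC β)) with hδdef
    have hδpos : 0 < δ := lt_min hωα (by positivity)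
    obtain ⟨O, hO, hOc, hOcont⟩ := hqc δ hδpos
    refine ⟨O, hO, ?_, hOcont⟩
    refine lt_of_le_of_lt (content_le_of_small d hα hαβ (min_le_left _ _) hOc) ?_
    rw [ENNReal.ofReal_lt_ofReal_iff hε]
    have hδ2 : δ ≤ ε * omegaC α / (2 * omegaC β) := min_le_right _ _
    have hmul : omegaC β / omegaC α * δ ≤ omegaC β / omegaC α *
        (ε * omegaC α / (2 * omegaC β)) :=
      mul_le_mul_of_nonneg_left hδ2 (by positivity)
    have heq : omegaC β / omegaC α * (ε * omegaC α / (2 * omegaC β)) = ε / 2 := by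
      field_simp
    linarith
  -- integrability for β
  have hintβ : choquetIntegral (hausdorffContent d β) Q₀.set (fun x => |u x|) < ⊤ := by
    refine lt_of_le_of_lt (key Q₀ _) ?_
    exact ENNReal.mul_lt_top ENNReal.ofReal_lt_top hint
  exact ⟨⟨⟨hqcβ, hintβ⟩, lt_of_le_of_lt hsemle
    (ENNReal.mul_lt_top ENNReal.ofReal_lt_top hsem)⟩, hsemle⟩


end
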